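/- Let Φ be a skew-adjoint linear operator on a finite-dimensional real inner product space with ‖Φ‖ ≤ 1, and let γ₁ > 0, γ₂ ∈ ℝ. Then for every vector ξ, ⟨(γ₁·Id - γ₂·Φ)⁻¹ξ, ξ⟩ ≥ (γ₁/(γ₁² + γ₂²))·‖ξ‖². -/

import Mathlib

/-- For skew-adjoint Φ with ‖Φ‖ ≤ 1, γ₁ > 0, the inverse B of γ₁·Id - γ₂·Φ satisfies
⟨Bξ, ξ⟩ ≥ (γ₁/(γ₁² + γ₂²))‖ξ‖². -/
theorem skew_shift_inverse_coercive {V : Type*} [NormedAddCommGroup V]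
    [InnerProductSpace ℝ V] [FiniteDimensional ℝ V] (Φ : V →L[ℝ] V)
    (hΦ : ∀ x y : V, (inner ℝ (Φ x) y : ℝ) = -(inner ℝ x (Φ y) : ℝ))
    (hΦnorm : ‖Φ‖ ≤ 1) (γ₁ γ₂ : ℝ) (hγ₁ : 0 < γ₁) (B : V →L[ℝ] V)
    (hB₁ : B ∘L (γ₁ • (ContinuousLinearMap.id ℝ V) - γ₂ • Φ) = ContinuousLinearMap.id ℝ V)
    (hB₂ : (γ₁ • (ContinuousLinearMap.id ℝ V) - γ₂ • Φ) ∘L B = ContinuousLinearMap.id ℝ V) :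
    ∀ ξ : V, (γ₁ / (γ₁ ^ 2 + γ₂ ^ 2)) * ‖ξ‖ ^ 2 ≤ (inner ℝ (B ξ) ξ : ℝ) := by
  intro ξ
  set x := B ξ with hx
  have hξ : γ₁ • x - γ₂ • Φ x = ξ := by
    have := congrArg (fun f => f ξ) hB₂
    simpa using this
  have hskew : (inner ℝ x (Φ x) : ℝ) = 0 := by
    have h1 := hΦ x x
    have h2 : (inner ℝ (Φ x) x : ℝ) = inner ℝ x (Φ x) := real_inner_comm _ _
    linarith [h1, h2]
  -- inner (B ξ) ξ = γ₁ ‖x‖²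
  have hinner : (inner ℝ x ξ : ℝ) = γ₁ * ‖x‖ ^ 2 := by
    rw [← hξ]
    rw [inner_sub_right, real_inner_smul_right, real_inner_smul_right,
      real_inner_self_eq_norm_sq, hskew]
    ring
  -- ‖ξ‖² ≤ (γ₁² + γ₂²) ‖x‖²
  have hΦx : ‖Φ x‖ ≤ ‖x‖ := by
    calc ‖Φ x‖ ≤ ‖Φ‖ * ‖x‖ := Φ.le_opNorm x
    _ ≤ 1 * ‖x‖ := by nlinarith [norm_nonneg x]
    _ = ‖x‖ := one_mul _
  have hskew2 : (inner ℝ (Φ x) x : ℝ) = 0 := by rw [real_inner_comm]; exact hskew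
  have hnorm : ‖ξ‖ ^ 2 ≤ (γ₁ ^ 2 + γ₂ ^ 2) * ‖x‖ ^ 2 := by
    have hsm : ‖γ₂ • Φ x‖ ^ 2 = γ₂ ^ 2 * ‖Φ x‖ ^ 2 := by
      rw [norm_smul, mul_pow, Real.norm_eq_abs, sq_abs]
    have h1 : ‖ξ‖ ^ 2 = γ₁ ^ 2 * ‖x‖ ^ 2 + γ₂ ^ 2 * ‖Φ x‖ ^ 2 := by
      rw [← hξ, ← real_inner_self_eq_norm_sq]
      rw [inner_sub_sub_self]
      simp only [real_inner_smul_left, real_inner_smul_right,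
        real_inner_self_eq_norm_sq, hskew, hskew2]
      rw [hsm, norm_smul γ₁ x, Real.norm_eq_abs, mul_pow, sq_abs]
      ring
    nlinarith [sq_nonneg γ₂, pow_le_pow_left₀ (norm_nonneg (Φ x)) hΦx 2]
  have hpos : 0 < γ₁ ^ 2 + γ₂ ^ 2 := by positivity
  have key : (γ₁ / (γ₁ ^ 2 + γ₂ ^ 2)) * ‖ξ‖ ^ 2 ≤ γ₁ * ‖x‖ ^ 2 := by
    rw [div_mul_eq_mul_div, div_le_iff₀ hpos]
    nlinarith [hγ₁.le]
  linarith [key, hinner.ge]
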